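/- Let G be a locally finite simple graph on a vertex set V that is a tree (connected and acyclic) in which every vertex has at least two neighbours. Then for any two vertices x and y, the boundaries x∂G and y∂G are homeomorphic. -/
import Mathlib


/-- The boundary `x∂G` of a graph `G` at a vertex `x`: the set of non-backtracking
infinite paths starting at `x`, as a subset of the product space `ℕ → V`. -/
def graphBoundary {V : Type*} (G : SimpleGraph V) (x : V) : Set (ℕ → V) :=
  {v | v 0 = x ∧ (∀ n : ℕ, G.Adj (v n) (v (n + 1))) ∧ ∀ n : ℕ, v (n + 2) ≠ v n}

open Classical in
/-- One-step rerooting map: if the ray passes through `y` at time 1, shift;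
otherwise prepend `y`. -/
noncomputable def gbStep {V : Type*} (y : V) (v : ℕ → V) : ℕ → V :=
  if v 1 = y then fun n => v (n + 1) else fun n => Nat.casesOn n y v

lemma gbStep_mapsTo {V : Type*} {G : SimpleGraph V} {x y : V} (hxy : G.Adj x y) :
    Set.MapsTo (gbStep y) (graphBoundary G x) (graphBoundary G y) := by
  rintro v ⟨h0, hadj, hnb⟩
  unfold gbStep
  split_ifs with h1
  · exact ⟨h1, fun n => hadj (n + 1), fun n => hnb (n + 1)⟩
  · refine ⟨rfl, ?_, ?_⟩
    · intro n
      cases n with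
      | zero => simpa [h0] using hxy.symm
      | succ m => exact hadj m
    · intro n
      cases n with
      | zero => simpa using h1
      | succ m => exact hnb m

lemma gbStep_gbStep {V : Type*} {G : SimpleGraph V} {x y : V} {v : ℕ → V}
    (hv : v ∈ graphBoundary G x) : gbStep x (gbStep y v) = v := by
  obtain ⟨h0, hadj, hnb⟩ := hv
  by_cases h1 : v 1 = y
  · have hw : gbStep y v = fun n => v (n + 1) := by unfold gbStep; rw [if_pos h1]
    rw [hw]
    have h2 : v 2 ≠ x := by rw [← h0]; exact hnb 0
    unfold gbStep
    rw [if_neg h2]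
    funext n
    cases n with
    | zero => exact h0.symm
    | succ m => rfl
  · have hw : gbStep y v = fun n => Nat.casesOn n y v := by unfold gbStep; rw [if_neg h1]
    rw [hw]
    unfold gbStep
    rw [if_pos (show (Nat.rec y (fun n _ => v n) 1 : V) = x from h0)]

lemma gbStep_continuous {V : Type*} [TopologicalSpace V] [DiscreteTopology V] (y : V) :
    Continuous (gbStep (V := V) y) := by
  refine continuous_pi fun n => ?_
  classical
  have heq : (fun v : ℕ → V => gbStep y v n) =
      fun v : ℕ → V => if v 1 = y then v (n + 1) else (Nat.casesOn n y v : V) := by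
    funext v
    unfold gbStep
    split_ifs <;> rfl
  rw [heq]
  refine Continuous.if ?_ (continuous_apply (n + 1)) ?_
  · intro a ha
    have hclopen : IsClopen {v : ℕ → V | v 1 = y} := by
      have : {v : ℕ → V | v 1 = y} = (fun v : ℕ → V => v 1) ⁻¹' {y} := rfl
      rw [this]
      exact (isClopen_discrete {y}).preimage (continuous_apply 1)
    rw [hclopen.frontier_eq] at ha
    exact absurd ha (Set.notMem_empty a)
  · cases n with
    | zero => exact continuous_const
    | succ m => exact continuous_apply m

noncomputable def gbHomeoAdj {V : Type*} [TopologicalSpace V] [DiscreteTopology V]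
    {G : SimpleGraph V} {x y : V} (hxy : G.Adj x y) :
    (graphBoundary G x) ≃ₜ (graphBoundary G y) where
  toFun v := ⟨gbStep y v.1, gbStep_mapsTo hxy v.2⟩
  invFun w := ⟨gbStep x w.1, gbStep_mapsTo hxy.symm w.2⟩
  left_inv v := Subtype.ext (gbStep_gbStep v.2)
  right_inv w := Subtype.ext (gbStep_gbStep w.2)
  continuous_toFun :=
    Continuous.subtype_mk ((gbStep_continuous y).comp continuous_subtype_val) _
  continuous_invFun :=
    Continuous.subtype_mk ((gbStep_continuous x).comp continuous_subtype_val) _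

/-- For a locally finite nonsingular tree `G`, the boundaries at any two vertices
`x` and `y` are homeomorphic (the topology being the subspace topology from the
product `ℕ → V` with `V` discrete). -/
theorem graphBoundary_basepoint_independent {V : Type*} [TopologicalSpace V]
    [DiscreteTopology V] (G : SimpleGraph V)
    (hloc : ∀ v : V, (G.neighborSet v).Finite)
    (htree : G.IsTree)
    (hns : ∀ v : V, ∃ u w : V, u ≠ w ∧ G.Adj v u ∧ G.Adj v w)
    (x y : V) :
    Nonempty ((graphBoundary G x) ≃ₜ (graphBoundary G y)) := by
  have key : ∀ {a b : V}, G.Walk a b → Nonempty ((graphBoundary G a) ≃ₜ (graphBoundary G b)) := by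
    intro a b w
    induction w with
    | nil => exact ⟨Homeomorph.refl _⟩
    | cons h _ ih => exact ⟨(gbHomeoAdj h).trans ih.some⟩
  obtain ⟨w⟩ := htree.isConnected.preconnected x y
  exact key w
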